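/- arXiv:1203.6717 — 2 statements merged into one kernel-verified Lean document; each statement's English description precedes it below -/
import Mathlib

section
/- Let f : ℂ → ℂ be continuously differentiable (as a real C¹ function) on a neighborhood of the closed disc of radius ε centered at 0. Then f(0) = (1/(2πi))·∮_{|σ|=ε} f(σ)/σ dσ + (1/(2πi))·∬_{|σ|<ε} (∂f/∂σ̄)(σ) · (dσ ∧ dσ̄)/σ. -/
open MeasureTheory Metric Set

/-- The Wirtinger derivative `∂f/∂σ̄ = ½(∂f/∂x + i·∂f/∂y)` of `f : ℂ → ℂ`. -/
noncomputable def wirtingerBar (f : ℂ → ℂ) (z : ℂ) : ℂ :=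
  (1 / 2) * (fderiv ℝ f z 1 + Complex.I * fderiv ℝ f z Complex.I)

theorem wb_key (f : ℂ → ℂ) (z v : ℂ) :
    fderiv ℝ f z v = ((1/2) * (fderiv ℝ f z 1 - Complex.I * fderiv ℝ f z Complex.I)) * v
      + (wirtingerBar f z) * (starRingEnd ℂ) v := by
  have h : ∀ (a b : ℝ), fderiv ℝ f z (a + b * Complex.I)
      = ((1/2) * (fderiv ℝ f z 1 - Complex.I * fderiv ℝ f z Complex.I)) * (a + b * Complex.I)
      + (wirtingerBar f z) * (starRingEnd ℂ) (a + b * Complex.I) := by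
    intro a b
    have e1 : (a:ℂ) + b * Complex.I = a • (1:ℂ) + b • Complex.I := by
      simp [Complex.real_smul]
    rw [e1, map_add, _root_.map_smul, _root_.map_smul]
    simp only [Complex.real_smul, smul_eq_mul, map_add, map_mul, Complex.conj_ofReal,
      Complex.conj_I, mul_one, wirtingerBar]
    linear_combination ((b:ℂ) * fderiv ℝ f z Complex.I) * Complex.I_sq
  have := h v.re v.im
  rwa [Complex.re_add_im] at this

theorem wb_norm (f : ℂ → ℂ) (z : ℂ) : ‖wirtingerBar f z‖ ≤ ‖fderiv ℝ f z‖ := by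
  have h1 : ‖fderiv ℝ f z 1‖ ≤ ‖fderiv ℝ f z‖ := by
    simpa using (fderiv ℝ f z).le_opNorm 1
  have h2 : ‖fderiv ℝ f z Complex.I‖ ≤ ‖fderiv ℝ f z‖ := by
    have := (fderiv ℝ f z).le_opNorm Complex.I
    simpa using this
  have h3 : ‖wirtingerBar f z‖ ≤ (1/2) * (‖fderiv ℝ f z‖ + ‖fderiv ℝ f z‖) := by
    rw [wirtingerBar, norm_mul]
    have h4 : ‖(1/2 : ℂ)‖ = 1/2 := by norm_num
    rw [h4]
    have h5 : ‖fderiv ℝ f z 1 + Complex.I * fderiv ℝ f z Complex.I‖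
        ≤ ‖fderiv ℝ f z‖ + ‖fderiv ℝ f z‖ := by
      refine (norm_add_le _ _).trans (add_le_add h1 ?_)
      rw [norm_mul]
      simpa [Complex.norm_I] using h2
    linarith
  linarith

theorem wb_meas (f : ℂ → ℂ) : Measurable (wirtingerBar f) := by
  unfold wirtingerBar
  exact measurable_const.mul ((measurable_fderiv_apply_const ℝ f 1).add
    (measurable_const.mul (measurable_fderiv_apply_const ℝ f Complex.I)))

theorem stepA_lem (f : ℂ → ℂ) (ε ε' ε₁ M : ℝ) (hε : 0 < ε) (hε₁ : ε < ε₁) (hε₁' : ε₁ < ε')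
    (hball : closedBall (0:ℂ) ε₁ ⊆ ball 0 ε')
    (hcf : ContinuousOn (fderiv ℝ f) (ball 0 ε'))
    (hdf : ∀ z ∈ ball (0:ℂ) ε', HasFDerivAt f (fderiv ℝ f z) z)
    (hcff : ContinuousOn f (ball 0 ε'))
    (hmem : ∀ r θ : ℝ, |r| ≤ ε₁ → circleMap 0 r θ ∈ closedBall (0:ℂ) ε₁)
    (hM : ∀ z ∈ closedBall (0:ℂ) ε₁, ‖fderiv ℝ f z‖ ≤ M) :
    ∀ r₀ ∈ Icc (0:ℝ) ε, HasDerivAt (fun r => ∫ θ in (0:ℝ)..(2*Real.pi), f (circleMap 0 r θ))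
      (∫ θ in (0:ℝ)..(2*Real.pi),
        fderiv ℝ f (circleMap 0 r₀ θ) (Complex.exp (θ*Complex.I))) r₀ := by
  intro r₀ hr₀
  have habs : ∀ x : ℝ, x ∈ ball r₀ (ε₁ - ε) → |x| ≤ ε₁ := by
    intro x hx
    rw [mem_ball, Real.dist_eq] at hx
    rw [abs_le]
    cases abs_le.mp hx.le with
    | intro h1 h2 => constructor <;> [linarith [hr₀.1, hr₀.2]; linarith [hr₀.1, hr₀.2]]
  have hr₀abs : |r₀| ≤ ε₁ := by rw [abs_le]; exact ⟨by linarith [hr₀.1], by linarith [hr₀.2]⟩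
  have hcont_f : ∀ x : ℝ, |x| ≤ ε₁ → Continuous fun θ => f (circleMap 0 x θ) := by
    intro x hx
    exact hcff.comp_continuous (continuous_circleMap 0 x) fun θ => hball (hmem x θ hx)
  have hcont_F' : Continuous fun θ =>
      fderiv ℝ f (circleMap 0 r₀ θ) (Complex.exp (θ*Complex.I)) := by
    refine Continuous.clm_apply ?_ ?_
    · exact hcf.comp_continuous (continuous_circleMap 0 r₀) fun θ => hball (hmem r₀ θ hr₀abs)
    · exact Continuous.cexp (by continuity)
  have hev : ∀ᶠ x in nhds r₀, |x| ≤ ε₁ := by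
    have : Ioo (-ε₁) ε₁ ∈ nhds r₀ :=
      Ioo_mem_nhds (by linarith [hr₀.1]) (by linarith [hr₀.2])
    filter_upwards [this] with x hx
    rw [abs_le]; exact ⟨hx.1.le, hx.2.le⟩
  have key := intervalIntegral.hasDerivAt_integral_of_dominated_loc_of_deriv_le
    (F := fun r θ => f (circleMap 0 r θ))
    (F' := fun r θ => fderiv ℝ f (circleMap 0 r θ) (Complex.exp (θ*Complex.I)))
    (x₀ := r₀) (a := 0) (b := 2*Real.pi) (μ := volume) (bound := fun _ => M)
    (s := ball r₀ (ε₁ - ε)) (ball_mem_nhds r₀ (by linarith : (0:ℝ) < ε₁ - ε))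
    (hev.mono fun x hx => ((hcont_f x hx).aestronglyMeasurable).restrict)
    ((hcont_f r₀ hr₀abs).intervalIntegrable 0 (2*Real.pi))
    (hcont_F'.aestronglyMeasurable.restrict)
    ?_ (intervalIntegrable_const) ?_
  · exact key.2
  · refine Filter.Eventually.of_forall fun θ _ x hx => ?_
    calc ‖fderiv ℝ f (circleMap 0 x θ) (Complex.exp (θ*Complex.I))‖
        ≤ ‖fderiv ℝ f (circleMap 0 x θ)‖ * ‖Complex.exp (θ*Complex.I)‖ :=
          ContinuousLinearMap.le_opNorm _ _
      _ ≤ M := by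
          rw [Complex.norm_exp_ofReal_mul_I, mul_one]
          exact hM _ (hmem x θ (habs x hx))
  · refine Filter.Eventually.of_forall fun θ _ x hx => ?_
    have hlin : HasDerivAt (fun r : ℝ => (r:ℂ) * Complex.exp (θ*Complex.I))
        (Complex.exp (θ*Complex.I)) x := by
      simpa using (Complex.ofRealCLM.hasDerivAt (x := x)).mul_const (Complex.exp (θ*Complex.I))
    have hz : ((x:ℂ) * Complex.exp (θ*Complex.I)) ∈ ball (0:ℂ) ε' := by
      rw [← circleMap_zero]; exact hball (hmem x θ (habs x hx))
    have := (hdf _ hz).comp_hasDerivAt x hlin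
    simpa [Function.comp_def, circleMap_zero] using this

theorem stepB_lem (f : ℂ → ℂ) (ε ε' ε₁ : ℝ) (hε : 0 < ε) (hε₁ : ε < ε₁) (hε₁' : ε₁ < ε')
    (hball : closedBall (0:ℂ) ε₁ ⊆ ball 0 ε')
    (hcf : ContinuousOn (fderiv ℝ f) (ball 0 ε'))
    (hdf : ∀ z ∈ ball (0:ℂ) ε', HasFDerivAt f (fderiv ℝ f z) z)
    (hmem : ∀ r θ : ℝ, |r| ≤ ε₁ → circleMap 0 r θ ∈ closedBall (0:ℂ) ε₁) :
    ∀ r₀ ∈ Icc (0:ℝ) ε,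
      (∫ θ in (0:ℝ)..(2*Real.pi), fderiv ℝ f (circleMap 0 r₀ θ) (Complex.exp (θ*Complex.I)))
        = 2 * ∫ θ in (0:ℝ)..(2*Real.pi),
            wirtingerBar f (circleMap 0 r₀ θ) * Complex.exp (-(θ*Complex.I)) := by
  intro r₀ hr₀
  have hπ := Real.pi_pos
  set wP : ℂ → ℂ := fun z =>
    (1/2) * (fderiv ℝ f z 1 - Complex.I * fderiv ℝ f z Complex.I) with hwP
  have hr₀abs : |r₀| ≤ ε₁ := by rw [abs_le]; exact ⟨by linarith [hr₀.1], by linarith [hr₀.2]⟩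
  have hDc : Continuous fun θ => fderiv ℝ f (circleMap 0 r₀ θ) :=
    hcf.comp_continuous (continuous_circleMap 0 r₀) fun θ => hball (hmem r₀ θ hr₀abs)
  have hcP : Continuous fun θ => wP (circleMap 0 r₀ θ) * Complex.exp (θ*Complex.I) := by
    apply Continuous.mul
    · exact Continuous.mul continuous_const
        ((hDc.clm_apply continuous_const).sub
          (continuous_const.mul (hDc.clm_apply continuous_const)))
    · exact Complex.continuous_exp.comp (by continuity)
  have hcQ : Continuous fun θ =>
      wirtingerBar f (circleMap 0 r₀ θ) * Complex.exp (-(θ*Complex.I)) := by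
    apply Continuous.mul
    · exact Continuous.mul continuous_const
        ((hDc.clm_apply continuous_const).add
          (continuous_const.mul (hDc.clm_apply continuous_const)))
    · exact Complex.continuous_exp.comp (by continuity)
  have hconj : ∀ θ : ℝ, (starRingEnd ℂ) (Complex.exp (θ*Complex.I))
      = Complex.exp (-(θ*Complex.I)) := by
    intro θ
    rw [← Complex.exp_conj]
    congr 1
    simp [Complex.conj_ofReal]
  set P := ∫ θ in (0:ℝ)..(2*Real.pi), wP (circleMap 0 r₀ θ) * Complex.exp (θ*Complex.I) with hP
  set Q := ∫ θ in (0:ℝ)..(2*Real.pi),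
    wirtingerBar f (circleMap 0 r₀ θ) * Complex.exp (-(θ*Complex.I)) with hQ
  have hPQ : P = Q := by
    rcases eq_or_lt_of_le hr₀.1 with h0 | h0
    · -- r₀ = 0
      have hint : ∫ θ in (0:ℝ)..(2*Real.pi), Complex.exp (θ*Complex.I) = 0 := by
        have : ∀ θ:ℝ, Complex.exp (θ*Complex.I) = Complex.exp (Complex.I * θ) := by
          intro θ; ring_nf
        rw [intervalIntegral.integral_congr fun θ _ => this θ,
          integral_exp_mul_complex Complex.I_ne_zero]
        have h1 : Complex.I * ((2*Real.pi:ℝ):ℂ) = 2*(Real.pi:ℂ)*Complex.I := by push_cast; ring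
        rw [show ((2:ℝ)*Real.pi : ℝ) = (2*Real.pi:ℝ) from rfl] at h1
        rw [h1, Complex.exp_two_pi_mul_I]
        simp
      have hint' : ∫ θ in (0:ℝ)..(2*Real.pi), Complex.exp (-(θ*Complex.I)) = 0 := by
        have : ∀ θ:ℝ, Complex.exp (-(θ*Complex.I)) = Complex.exp ((-Complex.I) * θ) := by
          intro θ; ring_nf
        rw [intervalIntegral.integral_congr fun θ _ => this θ,
          integral_exp_mul_complex (neg_ne_zero.mpr Complex.I_ne_zero)]
        have h2 : (-Complex.I) * ((2*Real.pi:ℝ):ℂ) = -(2*(Real.pi:ℂ)*Complex.I) := by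
          push_cast; ring
        rw [h2, Complex.exp_neg, Complex.exp_two_pi_mul_I]
        simp
      subst h0
      simp only [P, Q, circleMap_zero_radius, Function.const_apply]
      rw [intervalIntegral.integral_const_mul, intervalIntegral.integral_const_mul, hint, hint',
        mul_zero, mul_zero]
    · -- r₀ > 0
      have hz : ∀ θ : ℝ, circleMap 0 r₀ θ ∈ ball (0:ℂ) ε' :=
        fun θ => hball (hmem r₀ θ hr₀abs)
      have hu : ∀ θ : ℝ, HasDerivAt (fun t => f (circleMap 0 r₀ t))
          (fderiv ℝ f (circleMap 0 r₀ θ) (circleMap 0 r₀ θ * Complex.I)) θ :=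
        fun θ => (hdf _ (hz θ)).comp_hasDerivAt θ (hasDerivAt_circleMap 0 r₀ θ)
      have hderiv_eq : ∀ θ : ℝ, fderiv ℝ f (circleMap 0 r₀ θ) (circleMap 0 r₀ θ * Complex.I)
          = (Complex.I * r₀) * (wP (circleMap 0 r₀ θ) * Complex.exp (θ*Complex.I))
            - (Complex.I * r₀) *
              (wirtingerBar f (circleMap 0 r₀ θ) * Complex.exp (-(θ*Complex.I))) := by
        intro θ
        rw [wb_key]
        rw [circleMap_zero]
        rw [map_mul, map_mul, hconj θ, Complex.conj_ofReal, Complex.conj_I]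
        ring
      have hcu' : Continuous fun θ =>
          fderiv ℝ f (circleMap 0 r₀ θ) (circleMap 0 r₀ θ * Complex.I) := by
        have : Continuous fun θ => circleMap 0 r₀ θ * Complex.I :=
          (continuous_circleMap 0 r₀).mul continuous_const
        exact hDc.clm_apply this
      have hint0 : (∫ θ in (0:ℝ)..(2*Real.pi),
          fderiv ℝ f (circleMap 0 r₀ θ) (circleMap 0 r₀ θ * Complex.I)) = 0 := by
        rw [intervalIntegral.integral_eq_sub_of_hasDerivAt (fun θ _ => hu θ)
          (hcu'.intervalIntegrable 0 (2*Real.pi))]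
        have : circleMap 0 r₀ (2*Real.pi) = circleMap 0 r₀ 0 := by
          have := periodic_circleMap 0 r₀ 0
          simpa using this
        rw [this, sub_self]
      rw [intervalIntegral.integral_congr fun θ _ => hderiv_eq θ] at hint0
      rw [intervalIntegral.integral_sub
        ((hcP.intervalIntegrable 0 (2*Real.pi)).const_mul _)
        ((hcQ.intervalIntegrable 0 (2*Real.pi)).const_mul _),
        intervalIntegral.integral_const_mul, intervalIntegral.integral_const_mul] at hint0
      have hIr : (Complex.I * (r₀:ℂ)) ≠ 0 := by
        simp [Complex.ext_iff]
        intro h; exact absurd h (ne_of_gt h0)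
      have := sub_eq_zero.mp hint0
      exact mul_left_cancel₀ hIr this
  calc (∫ θ in (0:ℝ)..(2*Real.pi), fderiv ℝ f (circleMap 0 r₀ θ) (Complex.exp (θ*Complex.I)))
      = ∫ θ in (0:ℝ)..(2*Real.pi),
          (wP (circleMap 0 r₀ θ) * Complex.exp (θ*Complex.I)
            + wirtingerBar f (circleMap 0 r₀ θ) * Complex.exp (-(θ*Complex.I))) := by
        refine intervalIntegral.integral_congr fun θ _ => ?_
        rw [wb_key, hconj θ]
    _ = P + Q := intervalIntegral.integral_add (hcP.intervalIntegrable 0 (2*Real.pi))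
          (hcQ.intervalIntegrable 0 (2*Real.pi))
    _ = 2 * Q := by rw [hPQ]; ring

theorem stepC_lem (f : ℂ → ℂ) (ε ε₁ M : ℝ) (hε : 0 < ε) (hε₁ : ε < ε₁) (hM0 : 0 ≤ M)
    (hmem : ∀ r θ : ℝ, |r| ≤ ε₁ → circleMap 0 r θ ∈ closedBall (0:ℂ) ε₁)
    (hM : ∀ z ∈ closedBall (0:ℂ) ε₁, ‖fderiv ℝ f z‖ ≤ M) :
    IntervalIntegrable (fun r => 2 * ∫ θ in (0:ℝ)..(2*Real.pi),
      wirtingerBar f (circleMap 0 r θ) * Complex.exp (-(θ*Complex.I))) volume 0 ε := by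
  have hπ := Real.pi_pos
  rw [intervalIntegrable_iff, uIoc_of_le hε.le]
  have hmeas : StronglyMeasurable (fun p : ℝ × ℝ =>
      wirtingerBar f (circleMap 0 p.1 p.2) * Complex.exp (-(p.2*Complex.I))) := by
    apply Measurable.stronglyMeasurable
    apply Measurable.mul
    · exact (wb_meas f).comp
        (Continuous.measurable (by continuity : Continuous fun p : ℝ × ℝ => circleMap 0 p.1 p.2))
    · exact Complex.measurable_exp.comp (Continuous.measurable (by continuity))
  have hBmeas : StronglyMeasurable (fun r => ∫ θ in (0:ℝ)..(2*Real.pi),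
      wirtingerBar f (circleMap 0 r θ) * Complex.exp (-(θ*Complex.I))) := by
    have := StronglyMeasurable.integral_prod_right
      (f := fun r θ => wirtingerBar f (circleMap 0 r θ) * Complex.exp (-(θ*Complex.I)))
      (ν := volume.restrict (Ioc 0 (2*Real.pi))) hmeas
    have heq : (fun r => ∫ θ in (0:ℝ)..(2*Real.pi),
        wirtingerBar f (circleMap 0 r θ) * Complex.exp (-(θ*Complex.I)))
        = fun r => ∫ θ in Ioc (0:ℝ) (2*Real.pi),
          wirtingerBar f (circleMap 0 r θ) * Complex.exp (-(θ*Complex.I)) := by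
      funext r
      rw [intervalIntegral.integral_of_le (by linarith : (0:ℝ) ≤ 2*Real.pi)]
    rw [heq]
    exact this
  refine Integrable.mono' (g := fun _ => (2 : ℝ) * (2*Real.pi*M))
    ?_ ((measurable_const.mul hBmeas.measurable).stronglyMeasurable.aestronglyMeasurable) ?_
  · exact integrableOn_const measure_Ioc_lt_top.ne
  · refine (ae_restrict_iff' measurableSet_Ioc).mpr (Filter.Eventually.of_forall fun r hr => ?_)
    have hrabs : |r| ≤ ε₁ := by
      rw [abs_le]; exact ⟨by linarith [hr.1], by linarith [hr.2]⟩
    rw [norm_mul]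
    have hb : ‖∫ θ in (0:ℝ)..(2*Real.pi),
        wirtingerBar f (circleMap 0 r θ) * Complex.exp (-(θ*Complex.I))‖ ≤ M * |2*Real.pi - 0| := by
      refine intervalIntegral.norm_integral_le_of_norm_le_const fun θ _ => ?_
      rw [norm_mul]
      have he : ‖Complex.exp (-(θ*Complex.I))‖ = 1 := by
        have : -((θ:ℂ)*Complex.I) = ((-θ : ℝ):ℂ) * Complex.I := by push_cast; ring
        rw [this, Complex.norm_exp_ofReal_mul_I]
      rw [he, mul_one]
      exact (wb_norm f _).trans (hM _ (hmem r θ hrabs))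
    have : ‖(2:ℂ)‖ = 2 := by norm_num
    rw [this]
    calc (2:ℝ) * ‖_‖ ≤ 2 * (M * |2*Real.pi - 0|) := by
          exact mul_le_mul_of_nonneg_left hb (by norm_num)
      _ = 2 * (2*Real.pi*M) := by
          rw [sub_zero, abs_of_pos (by linarith : (0:ℝ) < 2*Real.pi)]
          ring

theorem stepE_lem (f : ℂ → ℂ) (ε : ℝ) (hε : 0 < ε) :
    (∮ σ in C(0, ε), f σ / σ)
      = Complex.I * ∫ θ in (0:ℝ)..(2*Real.pi), f (circleMap 0 ε θ) := by
  rw [circleIntegral, ← intervalIntegral.integral_const_mul]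
  refine intervalIntegral.integral_congr fun θ hθ => ?_
  have hne : circleMap 0 ε θ ≠ 0 := circleMap_ne_center (ne_of_gt hε)
  rw [deriv_circleMap]
  field_simp
  simp [hne, mul_assoc]
  rw [mul_comm, mul_assoc, div_mul_cancel₀ _ hne]

section
open Real
theorem stepF_lem (f : ℂ → ℂ) (ε ε₁ M : ℝ) (hε : 0 < ε) (hε₁ : ε < ε₁) (hM0 : 0 ≤ M)
    (hmem : ∀ r θ : ℝ, |r| ≤ ε₁ → circleMap 0 r θ ∈ closedBall (0:ℂ) ε₁)
    (hM : ∀ z ∈ closedBall (0:ℂ) ε₁, ‖fderiv ℝ f z‖ ≤ M) :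
    (∫ σ in Metric.ball (0:ℂ) ε, wirtingerBar f σ * (-2 * Complex.I) / σ)
      = ∫ r in (0:ℝ)..ε, (-2 * Complex.I) *
          ∫ θ in (0:ℝ)..(2*Real.pi), wirtingerBar f (circleMap 0 r θ)
            * Complex.exp (-(θ*Complex.I)) := by
  have hπ := Real.pi_pos
  have hcm : Continuous fun p : ℝ × ℝ => circleMap 0 p.1 p.2 := by
    simp only [circleMap_zero]
    exact (Complex.continuous_ofReal.comp continuous_fst).mul
      (Complex.continuous_exp.comp
        ((Complex.continuous_ofReal.comp continuous_snd).mul continuous_const))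
  set G : ℝ × ℝ → ℂ := fun p => (-2 * Complex.I) *
    (wirtingerBar f (circleMap 0 p.1 p.2) * Complex.exp (-(p.2*Complex.I))) with hG
  set h : ℂ → ℂ := fun σ => wirtingerBar f σ * (-2 * Complex.I) / σ with hh
  set A : Set (ℝ × ℝ) := {p | |p.1| < ε} with hA
  have hAmeas : MeasurableSet A := measurableSet_lt (measurable_fst.abs) measurable_const
  have hind : ∀ p : ℝ × ℝ, p.1 • (Metric.ball (0:ℂ) ε).indicator h (Complex.polarCoord.symm p)
      = A.indicator (fun q => q.1 • h (Complex.polarCoord.symm q)) p := by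
    intro p
    have hmemiff : Complex.polarCoord.symm p ∈ Metric.ball (0:ℂ) ε ↔ |p.1| < ε := by
      rw [mem_ball, Complex.dist_eq, sub_zero, Complex.norm_polarCoord_symm]
    by_cases hp : |p.1| < ε
    · rw [indicator_of_mem (hmemiff.mpr hp), indicator_of_mem (by exact hp)]
    · rw [indicator_of_notMem (fun hc => hp (hmemiff.mp hc)),
        indicator_of_notMem (by exact hp), smul_zero]
  have hseteq : polarCoord.target ∩ A = Ioo (0:ℝ) ε ×ˢ Ioo (-π) π := by
    rw [polarCoord_target]
    ext p
    simp only [hA, mem_inter_iff, mem_prod, mem_Ioi, mem_Ioo, mem_setOf_eq]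
    constructor
    · rintro ⟨⟨h1, h2⟩, h3⟩
      exact ⟨⟨h1, (abs_lt.mp h3).2⟩, h2⟩
    · rintro ⟨⟨h1, h2⟩, h3⟩
      exact ⟨⟨h1, h3⟩, abs_lt.mpr ⟨by linarith, h2⟩⟩
  have hpt : ∀ p ∈ Ioo (0:ℝ) ε ×ˢ Ioo (-π) π,
      p.1 • h (Complex.polarCoord.symm p) = G p := by
    rintro p ⟨hp1, _⟩
    have hsymm : Complex.polarCoord.symm p = circleMap 0 p.1 p.2 := by
      rw [Complex.polarCoord_symm_apply, circleMap_zero, Complex.exp_mul_I,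
        ← Complex.ofReal_cos, ← Complex.ofReal_sin]
    rw [hsymm, hh, hG]
    simp only []
    rw [Complex.real_smul, circleMap_zero]
    have hexpne : Complex.exp ((p.2:ℂ) * Complex.I) ≠ 0 := Complex.exp_ne_zero _
    have hp1ne : ((p.1:ℝ):ℂ) ≠ 0 := by
      simpa using (ne_of_gt hp1.1)
    rw [Complex.exp_neg]
    field_simp
  have hGmeas : Measurable G := by
    apply measurable_const.mul
    apply Measurable.mul
    · exact (wb_meas f).comp hcm.measurable
    · exact Complex.measurable_exp.comp (Continuous.measurable
        (((Complex.continuous_ofReal.comp continuous_snd).mul continuous_const).neg))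
  have hGbound : ∀ p : ℝ × ℝ, |p.1| ≤ ε₁ → ‖G p‖ ≤ 2 * M := by
    intro p hp
    rw [hG]
    simp only []
    have he : ‖Complex.exp (-((p.2:ℂ)*Complex.I))‖ = 1 := by
      have : -((p.2:ℂ)*Complex.I) = ((-p.2 : ℝ):ℂ) * Complex.I := by push_cast; ring
      rw [this, Complex.norm_exp_ofReal_mul_I]
    have hc : ‖(-2 * Complex.I : ℂ)‖ = 2 := by
      simp
    rw [norm_mul, hc, norm_mul, he, mul_one]
    exact mul_le_mul_of_nonneg_left ((wb_norm f _).trans (hM _ (hmem p.1 p.2 hp))) (by norm_num)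
  have hper : ∀ r : ℝ, Function.Periodic
      (fun θ => (-2 * Complex.I) *
        (wirtingerBar f (circleMap 0 r θ) * Complex.exp (-(θ*Complex.I)))) (2*π) := by
    intro r θ
    have h1 : circleMap 0 r (θ + 2*π) = circleMap 0 r θ := periodic_circleMap 0 r θ
    have h2 : Complex.exp (-(((θ + 2*π : ℝ):ℂ)*Complex.I)) = Complex.exp (-(θ*Complex.I)) := by
      have : -(((θ + 2*π : ℝ):ℂ)*Complex.I) = -(θ*Complex.I) + -(2*π*Complex.I) := by
        push_cast; ring
      rw [this, Complex.exp_add, Complex.exp_neg (2*π*Complex.I), Complex.exp_two_pi_mul_I]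
      simp
    simp only [h1, h2]
  have hinner : ∀ r : ℝ, (∫ θ in Ioo (-π) π, (-2 * Complex.I) *
      (wirtingerBar f (circleMap 0 r θ) * Complex.exp (-(θ*Complex.I))))
      = (-2 * Complex.I) * ∫ θ in (0:ℝ)..(2*π),
          wirtingerBar f (circleMap 0 r θ) * Complex.exp (-(θ*Complex.I)) := by
    intro r
    rw [← MeasureTheory.integral_Ioc_eq_integral_Ioo,
      ← intervalIntegral.integral_of_le (by linarith : -π ≤ π)]
    have := (hper r).intervalIntegral_add_eq (-π) 0
    rw [show -π + 2*π = π by ring, zero_add] at this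
    rw [this, intervalIntegral.integral_const_mul]
  calc (∫ σ in Metric.ball (0:ℂ) ε, h σ)
      = ∫ σ, (Metric.ball (0:ℂ) ε).indicator h σ := (integral_indicator measurableSet_ball).symm
    _ = ∫ p in polarCoord.target,
          p.1 • (Metric.ball (0:ℂ) ε).indicator h (Complex.polarCoord.symm p) :=
        (Complex.integral_comp_polarCoord_symm _).symm
    _ = ∫ p in polarCoord.target,
          A.indicator (fun q => q.1 • h (Complex.polarCoord.symm q)) p := by
        simp_rw [hind]
    _ = ∫ p in polarCoord.target ∩ A, p.1 • h (Complex.polarCoord.symm p) :=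
        setIntegral_indicator hAmeas
    _ = ∫ p in Ioo (0:ℝ) ε ×ˢ Ioo (-π) π, p.1 • h (Complex.polarCoord.symm p) := by
        rw [hseteq]
    _ = ∫ p in Ioo (0:ℝ) ε ×ˢ Ioo (-π) π, G p :=
        setIntegral_congr_fun (measurableSet_Ioo.prod measurableSet_Ioo) hpt
    _ = ∫ r in Ioo (0:ℝ) ε, ∫ θ in Ioo (-π) π, G (r, θ) := by
        rw [Measure.volume_eq_prod]
        refine setIntegral_prod _ ?_
        refine Integrable.mono' (g := fun _ => 2 * M) ?_
          (hGmeas.aestronglyMeasurable.restrict) ?_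
        · refine integrableOn_const ?_
          rw [Measure.prod_prod]
          exact (ENNReal.mul_lt_top measure_Ioo_lt_top measure_Ioo_lt_top).ne
        · refine (ae_restrict_iff' (measurableSet_Ioo.prod measurableSet_Ioo)).mpr
            (Filter.Eventually.of_forall fun p hp => ?_)
          refine hGbound p ?_
          have h5 := hp.1
          rw [abs_le]
          exact ⟨by linarith [h5.1], by linarith [h5.2]⟩
    _ = ∫ r in (0:ℝ)..ε, (-2 * Complex.I) *
          ∫ θ in (0:ℝ)..(2*Real.pi), wirtingerBar f (circleMap 0 r θ)
            * Complex.exp (-(θ*Complex.I)) := by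
        rw [← MeasureTheory.integral_Ioc_eq_integral_Ioo,
          ← intervalIntegral.integral_of_le hε.le]
        refine intervalIntegral.integral_congr fun r hr => ?_
        exact hinner r

end

/-- Cauchy–Pompeiu formula: if `f` is real-`C¹` on a neighbourhood of the closed disc of
radius `ε` about `0`, then
`f(0) = (2πi)⁻¹ ∮_{|σ|=ε} f(σ)/σ dσ + (2πi)⁻¹ ∬_{|σ|<ε} (∂f/∂σ̄)(σ) (dσ∧dσ̄)/σ`,
where the area integral uses `dσ ∧ dσ̄ = −2i·dA`. -/
theorem stmt_7 (f : ℂ → ℂ) (ε ε' : ℝ) (hε : 0 < ε) (hεε' : ε < ε')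
    (hf : ContDiffOn ℝ 1 f (Metric.closedBall (0:ℂ) ε')) :
    f 0 = (2 * Real.pi * Complex.I)⁻¹ * (∮ σ in C(0, ε), f σ / σ)
        + (2 * Real.pi * Complex.I)⁻¹ *
            ∫ σ in Metric.ball (0:ℂ) ε, wirtingerBar f σ * (-2 * Complex.I) / σ := by
  have hπ := Real.pi_pos
  set ε₁ := (ε + ε') / 2 with hε₁def
  have hε₁ : ε < ε₁ := by simp [hε₁def]; linarith
  have hε₁' : ε₁ < ε' := by simp [hε₁def]; linarith
  have hball : closedBall (0:ℂ) ε₁ ⊆ ball 0 ε' := closedBall_subset_ball hε₁'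
  have hfo : ContDiffOn ℝ 1 f (ball 0 ε') := hf.mono ball_subset_closedBall
  have hcf : ContinuousOn (fderiv ℝ f) (ball 0 ε') :=
    hfo.continuousOn_fderiv_of_isOpen isOpen_ball le_rfl
  have hdf : ∀ z ∈ ball (0:ℂ) ε', HasFDerivAt f (fderiv ℝ f z) z := fun z hz =>
    ((hfo.differentiableOn one_ne_zero).differentiableAt (isOpen_ball.mem_nhds hz)).hasFDerivAt
  have hcff : ContinuousOn f (ball 0 ε') := hfo.continuousOn
  have hmem : ∀ r θ : ℝ, |r| ≤ ε₁ → circleMap 0 r θ ∈ closedBall (0:ℂ) ε₁ := by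
    intro r θ hr
    simp [mem_closedBall, Complex.dist_eq, norm_circleMap_zero, hr]
  obtain ⟨M, hM0, hM⟩ : ∃ M, 0 ≤ M ∧ ∀ z ∈ closedBall (0:ℂ) ε₁, ‖fderiv ℝ f z‖ ≤ M := by
    obtain ⟨M, hM⟩ := (isCompact_closedBall (0:ℂ) ε₁).exists_bound_of_continuousOn
      (hcf.mono hball)
    exact ⟨max M 0, le_max_right _ _, fun z hz => (hM z hz).trans (le_max_left _ _)⟩
  set Φ : ℝ → ℂ := fun r => ∫ θ in (0:ℝ)..(2*Real.pi), f (circleMap 0 r θ) with hΦdef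
  set B : ℝ → ℂ := fun r =>
    ∫ θ in (0:ℝ)..(2*Real.pi), wirtingerBar f (circleMap 0 r θ) * Complex.exp (-(θ*Complex.I))
    with hBdef
  have stepAB : ∀ r₀ ∈ Icc (0:ℝ) ε, HasDerivAt Φ (2 * B r₀) r₀ := fun r₀ hr₀ =>
    (stepB_lem f ε ε' ε₁ hε hε₁ hε₁' hball hcf hdf hmem r₀ hr₀) ▸
      (stepA_lem f ε ε' ε₁ M hε hε₁ hε₁' hball hcf hdf hcff hmem hM r₀ hr₀)
  have stepC : IntervalIntegrable (fun r => 2 * B r) volume 0 ε :=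
    stepC_lem f ε ε₁ M hε hε₁ hM0 hmem hM
  have ftc : Φ ε - Φ 0 = ∫ r in (0:ℝ)..ε, 2 * B r := by
    refine (intervalIntegral.integral_eq_sub_of_hasDerivAt (fun r hr => ?_) stepC).symm
    exact stepAB r (by rwa [Set.uIcc_of_le hε.le] at hr)
  have stepD : Φ 0 = 2 * Real.pi * f 0 := by
    simp [hΦdef, circleMap_zero_radius]
  have stepE : (∮ σ in C(0, ε), f σ / σ) = Complex.I * Φ ε := stepE_lem f ε hε
  have stepF : (∫ σ in Metric.ball (0:ℂ) ε, wirtingerBar f σ * (-2 * Complex.I) / σ)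
      = ∫ r in (0:ℝ)..ε, (-2 * Complex.I) * B r :=
    stepF_lem f ε ε₁ M hε hε₁ hM0 hmem hM
  have hπI : (2 * (Real.pi:ℂ) * Complex.I) ≠ 0 := by
    simp [Complex.ext_iff, Real.pi_ne_zero]
  rw [stepE, stepF]
  have harea : (∫ r in (0:ℝ)..ε, (-2 * Complex.I) * B r)
      = -Complex.I * ∫ r in (0:ℝ)..ε, 2 * B r := by
    rw [← intervalIntegral.integral_const_mul]
    congr 1; funext r; ring
  rw [harea, ← ftc, stepD]
  field_simp
  ring
end

section
/- Let v = (w−a)/(1−aw) with a ∈ (−1,1) real, where z = exp((w+1)/(w−1)) defines w as a function of z on the punctured disc. Then dv = ((|v|²−1)(v−1)/(v̄−1)) · dz/(z·log(1/|z|²)). -/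
open Complex

set_option maxHeartbeats 2000000

/-- Quasi-coordinate differential identity: with `v = (w−a)/(1−aw)` (`a ∈ (−1,1)` real)
and `z = exp((w+1)/(w−1))` on the unit disc, one has
`dv = ((|v|²−1)(v−1)/(v̄−1)) · dz/(z·log(1/|z|²))`, expressed via derivatives in `w`. -/
theorem stmt_17 (a : ℝ) (ha : -1 < a) (ha' : a < 1) (w : ℂ) (hw : ‖w‖ < 1) :
    deriv (fun w : ℂ => (w - (a : ℂ)) / (1 - (a : ℂ) * w)) w
      = (((‖(w - (a : ℂ)) / (1 - (a : ℂ) * w)‖ : ℂ) ^ 2 - 1)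
            * ((w - (a : ℂ)) / (1 - (a : ℂ) * w) - 1)
            / ((starRingEnd ℂ) ((w - (a : ℂ)) / (1 - (a : ℂ) * w)) - 1))
          * deriv (fun w : ℂ => Complex.exp ((w + 1) / (w - 1))) w
          / (Complex.exp ((w + 1) / (w - 1))
              * (Real.log (1 / ‖Complex.exp ((w + 1) / (w - 1))‖ ^ 2) : ℂ)) := by
  set c := (starRingEnd ℂ) w with hc
  have habs : |a| < 1 := abs_lt.mpr ⟨ha, ha'⟩
  have hcabs : ‖c‖ = ‖w‖ := Complex.norm_conj w
  have haw : (1 : ℂ) - (a : ℂ) * w ≠ 0 := by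
    intro h
    have h1 : (a : ℂ) * w = 1 := by linear_combination -h
    have h2 := congrArg (‖·‖) h1
    rw [norm_mul, Complex.norm_real, Real.norm_eq_abs, norm_one] at h2
    nlinarith [norm_nonneg w, abs_nonneg a]
  have hac : (1 : ℂ) - (a : ℂ) * c ≠ 0 := by
    intro h
    have h1 : (a : ℂ) * c = 1 := by linear_combination -h
    have h2 := congrArg (‖·‖) h1
    rw [norm_mul, Complex.norm_real, Real.norm_eq_abs, hcabs, norm_one] at h2
    nlinarith [norm_nonneg w, abs_nonneg a]
  have hw1 : w - 1 ≠ 0 := by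
    intro h
    have h1 : w = 1 := by linear_combination h
    rw [h1] at hw; simp at hw
  have hc1 : c - 1 ≠ 0 := by
    intro h
    have h1 : c = 1 := by linear_combination h
    apply hw1
    have h2 := congrArg (starRingEnd ℂ) h1
    simp [hc] at h2
    rw [h2]; ring
  have hwc : w * c - 1 ≠ 0 := by
    intro h
    have h1 : w * c = 1 := by linear_combination h
    have h2 := congrArg (‖·‖) h1
    rw [norm_mul, hcabs, norm_one] at h2
    nlinarith [norm_nonneg w]
  have hE : Complex.exp ((w + 1) / (w - 1)) ≠ 0 := Complex.exp_ne_zero _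
  -- derivative of the Möbius map
  have hderiv1 : deriv (fun w : ℂ => (w - (a : ℂ)) / (1 - (a : ℂ) * w)) w
      = (1 - (a : ℂ) ^ 2) / (1 - (a : ℂ) * w) ^ 2 := by
    have h1 : HasDerivAt (fun w : ℂ => w - (a : ℂ)) 1 w := (hasDerivAt_id w).sub_const _
    have h2 : HasDerivAt (fun w : ℂ => 1 - (a : ℂ) * w) (-((a : ℂ) * 1)) w :=
      (((hasDerivAt_id w).const_mul (a : ℂ))).const_sub 1
    have h3 : deriv (fun w : ℂ => (w - (a : ℂ)) / (1 - (a : ℂ) * w)) w = _ := (h1.div h2 haw).deriv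
    rw [h3]
    field_simp
    ring
  -- derivative of the exponential map
  have hderiv2 : deriv (fun w : ℂ => Complex.exp ((w + 1) / (w - 1))) w
      = Complex.exp ((w + 1) / (w - 1)) * (-2 / (w - 1) ^ 2) := by
    have h1 : HasDerivAt (fun w : ℂ => (w + 1) / (w - 1))
        ((1 * (w - 1) - (w + 1) * 1) / (w - 1) ^ 2) w :=
      ((hasDerivAt_id w).add_const 1).div ((hasDerivAt_id w).sub_const 1) hw1
    have h2 := h1.cexp.deriv
    rw [h2]
    congr 1
    field_simp
    ring
  -- the logarithm
  have hlog : Real.log (1 / ‖Complex.exp ((w + 1) / (w - 1))‖ ^ 2)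
      = -2 * ((w + 1) / (w - 1)).re := by
    rw [Complex.norm_exp, one_div, Real.log_inv, Real.log_pow, Real.log_exp]
    push_cast
    ring
  have hconj_u : (starRingEnd ℂ) ((w + 1) / (w - 1)) = (c + 1) / (c - 1) := by
    simp [map_div₀, hc]
  have hre2 : ((-2 * ((w + 1) / (w - 1)).re : ℝ) : ℂ)
      = -((w + 1) / (w - 1) + (c + 1) / (c - 1)) := by
    rw [← hconj_u, Complex.add_conj]
    push_cast
    ring
  have hsum : (w + 1) / (w - 1) + (c + 1) / (c - 1) = 2 * (w * c - 1) / ((w - 1) * (c - 1)) := by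
    field_simp
    ring
  have hconj_v : (starRingEnd ℂ) ((w - (a : ℂ)) / (1 - (a : ℂ) * w))
      = (c - (a : ℂ)) / (1 - (a : ℂ) * c) := by
    simp [map_div₀, hc, Complex.conj_ofReal]
  have habsv : ((‖(w - (a : ℂ)) / (1 - (a : ℂ) * w)‖ : ℂ)) ^ 2
      = ((w - (a : ℂ)) / (1 - (a : ℂ) * w)) * ((c - (a : ℂ)) / (1 - (a : ℂ) * c)) := by
    rw [← hconj_v, ← Complex.ofReal_pow, Complex.sq_norm, Complex.mul_conj]
  have ha1 : (1 : ℂ) + (a : ℂ) ≠ 0 := by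
    intro h'
    have h1 : (a : ℂ) = -1 := by linear_combination h'
    have h2 : a = (-1 : ℝ) := by exact_mod_cast h1
    linarith
  have hvc1 : (c - (a : ℂ)) / (1 - (a : ℂ) * c) - 1 ≠ 0 := by
    have h : (c - (a : ℂ)) / (1 - (a : ℂ) * c) - 1 = ((1 + (a : ℂ)) * (c - 1)) / (1 - (a : ℂ) * c) := by
      rw [div_sub_one hac]
      ring
    rw [h]
    exact div_ne_zero (mul_ne_zero ha1 hc1) hac
  rw [hderiv1, hderiv2, hlog, hre2, hsum, hconj_v, habsv]
  set E := Complex.exp ((w + 1) / (w - 1)) with hEdef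
  set A := ((w - (a : ℂ)) / (1 - (a : ℂ) * w) * ((c - (a : ℂ)) / (1 - (a : ℂ) * c)) - 1)
      * ((w - (a : ℂ)) / (1 - (a : ℂ) * w) - 1) / ((c - (a : ℂ)) / (1 - (a : ℂ) * c) - 1)
    with hA
  have hcancel : A * (E * (-2 / (w - 1) ^ 2))
        / (E * -(2 * (w * c - 1) / ((w - 1) * (c - 1))))
      = A * (-2 / (w - 1) ^ 2) / -(2 * (w * c - 1) / ((w - 1) * (c - 1))) := by
    rw [show A * (E * (-2 / (w - 1) ^ 2)) = E * (A * (-2 / (w - 1) ^ 2)) by ring,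
      mul_div_mul_left _ _ hE]
  have hN3 : (c - (a : ℂ)) - (1 - (a : ℂ) * c) ≠ 0 := by
    rw [show (c - (a : ℂ)) - (1 - (a : ℂ) * c) = (1 + (a : ℂ)) * (c - 1) by ring]
    exact mul_ne_zero ha1 hc1
  have hAval : A = (1 - (a : ℂ) ^ 2) * (w * c - 1) * (w - 1) / ((c - 1) * (1 - (a : ℂ) * w) ^ 2) := by
    rw [hA, div_mul_div_comm, div_sub_one (mul_ne_zero haw hac), div_sub_one haw,
      div_sub_one hac]
    rw [div_eq_div_iff ?_ (mul_ne_zero hc1 (pow_ne_zero 2 haw))]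
    · have haw' : (1 : ℂ) - w * (a : ℂ) ≠ 0 := by rwa [mul_comm]
      have hac' : (1 : ℂ) - c * (a : ℂ) ≠ 0 := by rwa [mul_comm]
      field_simp
      ring
    · exact div_ne_zero hN3 hac
  rw [hcancel, hAval, div_neg, div_div_eq_mul_div]
  field_simp [haw, hac, hw1, hc1, hwc]
end
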